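/- Let a ≥ 0, C > 0 and r > 0, and let ρ : ℂ² → ℝ be a function satisfying ρ(z) ≥ 2 Re z₁ + a|z₂|² − C(|z₁||z₂| + |z₁|² + |z₂|³) for all z = (z₁,z₂) with |z| < r. Then there exist constants c > 0 and ε₀ > 0 such that for every ε ∈ (0, ε₀) and every z = (z₁,z₂) ∈ ℂ² with |z₁ − ε| < ε/2 and |z₂| < c ε^{1/3}, one has ρ(z) > 0; in particular, for every ε ∈ (0, ε₀) the bidisc {(z₁,z₂) : |z₁ − ε| < ε/2, |z₂| < c ε^{1/3}} is disjoint from the set {z : ρ(z) < 0}. -/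

import Mathlib

open MeasureTheory Filter Metric Complex Bornology
open scoped ENNReal Topology NNReal

noncomputable section

abbrev Cn (n : ℕ) := EuclideanSpace ℂ (Fin n)

instance CnMeasurableSpace (n : ℕ) : MeasurableSpace (Cn n) :=
  MeasurableSpace.comap WithLp.ofLp MeasurableSpace.pi
instance CnBorelSpace (n : ℕ) : BorelSpace (Cn n) := PiLp.borelSpace 2
instance CnMeasureSpace (n : ℕ) : MeasureSpace (Cn n) :=
  ⟨(MeasureTheory.Measure.pi fun _ => (volume : MeasureTheory.Measure ℂ)).map (WithLp.toLp 2)⟩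

/-- Wirtinger derivative `∑ⱼ (∂ρ/∂zⱼ)(p) vⱼ` of a real-valued function,
as a complex-linear functional applied to `v`. -/
def wirtingerDeriv (n : ℕ) (ρ : Cn n → ℝ) (p v : Cn n) : ℂ :=
  (1 / 2 : ℂ) * ((fderiv ℝ ρ p v : ℂ) - Complex.I * (fderiv ℝ ρ p (Complex.I • v) : ℂ))

/-- Levi form `∑ⱼₖ (∂²ρ/∂zⱼ∂z̄ₖ)(p) vⱼ v̄ₖ`. -/
def leviForm (n : ℕ) (ρ : Cn n → ℝ) (p v : Cn n) : ℂ :=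
  (1 / 2 : ℂ) * (fderiv ℝ (fun q => wirtingerDeriv n ρ q v) p v
    + Complex.I * fderiv ℝ (fun q => wirtingerDeriv n ρ q v) p (Complex.I • v))

/-- `ρ` is a smooth (global) defining function of `Ω`. -/
def IsDefiningFunction (n : ℕ) (ρ : Cn n → ℝ) (Ω : Set (Cn n)) : Prop :=
  ContDiff ℝ (⊤ : ℕ∞) ρ ∧ Ω = {z | ρ z < 0} ∧ ∀ z ∈ frontier Ω, fderiv ℝ ρ z ≠ 0

/-- `Ω` has smooth boundary. -/
def HasSmoothBoundary (n : ℕ) (Ω : Set (Cn n)) : Prop :=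
  ∃ ρ, IsDefiningFunction n ρ Ω

/-- `Ω` is pseudoconvex with smooth boundary: for some smooth defining function the
Levi form is nonnegative on complex tangent vectors at every boundary point. -/
def IsPseudoconvex (n : ℕ) (Ω : Set (Cn n)) : Prop :=
  ∃ ρ, IsDefiningFunction n ρ Ω ∧
    ∀ p ∈ frontier Ω, ∀ t : Cn n, wirtingerDeriv n ρ p t = 0 →
      0 ≤ (leviForm n ρ p t).re ∧ (leviForm n ρ p t).im = 0

/-- `z0` is a local holomorphic peak point of `Ω`. -/
def IsLocalPeakPoint (n : ℕ) (Ω : Set (Cn n)) (z0 : Cn n) : Prop :=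
  ∃ U : Set (Cn n), IsOpen U ∧ z0 ∈ U ∧ ∃ h : Cn n → ℂ,
    DifferentiableOn ℂ h (Ω ∩ U) ∧ ContinuousOn h (closure (Ω ∩ U)) ∧
    h z0 = 1 ∧ ∀ z ∈ closure (Ω ∩ U), z ≠ z0 → ‖h z‖ < 1

/-- squared Hardy norm `‖f‖²_{h²(Ω)} = limsup_{ε→0⁺} ∫_{∂Ω_ε} |f|² dσ`. -/
def hardySq (n : ℕ) (Ω : Set (Cn n)) (f : Cn n → ℂ) : ℝ≥0∞ :=
  Filter.limsup
    (fun ε : ℝ =>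
      ∫⁻ z in frontier {w ∈ Ω | ε < infDist w (frontier Ω)}, (‖f z‖₊ : ℝ≥0∞) ^ 2
        ∂(μH[2 * (n : ℝ) - 1]))
    (𝓝[>] (0 : ℝ))

/-- The Szegő kernel of `Ω` on the diagonal. -/
def szego (n : ℕ) (Ω : Set (Cn n)) (z : Cn n) : ℝ≥0∞ :=
  ⨆ f ∈ {f : Cn n → ℂ | DifferentiableOn ℂ f Ω ∧ hardySq n Ω f ≤ 1},
    (‖f z‖₊ : ℝ≥0∞) ^ 2

/-- The Bergman kernel of `Ω` on the diagonal. -/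
def bergman (n : ℕ) (Ω : Set (Cn n)) (z : Cn n) : ℝ≥0∞ :=
  ⨆ f ∈ {f : Cn n → ℂ |
      DifferentiableOn ℂ f Ω ∧ ∫⁻ w in Ω, (‖f w‖₊ : ℝ≥0∞) ^ 2 ≤ 1},
    (‖f z‖₊ : ℝ≥0∞) ^ 2

/-- `(z', t) ∈ ℂⁿ × ℂ` as a point of `ℂ^{n+1}`. -/
def snocC (n : ℕ) (z' : Cn n) (t : ℂ) : Cn (n + 1) :=
  (EuclideanSpace.equiv (Fin (n + 1)) ℂ).symm
    (Fin.snoc ((EuclideanSpace.equiv (Fin n) ℂ) z') t)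

/-- The slice `Ω_t = {z' : (z',t) ∈ Ω}`. -/
def sliceSet (n : ℕ) (Ω : Set (Cn (n + 1))) (t : ℂ) : Set (Cn n) :=
  {z' | snocC n z' t ∈ Ω}

/-- Holomorphic tangential transverse property at `0`. -/
def HTTPAt (n : ℕ) (Ω : Set (Cn (n + 1))) : Prop :=
  ∃ ρ, IsDefiningFunction (n + 1) ρ Ω ∧ ∃ r > (0 : ℝ), ∀ t : ℂ, ‖t‖ < r →
    ∀ z' ∈ frontier (sliceSet n Ω t), fderiv ℝ (fun w' => ρ (snocC n w' t)) z' ≠ 0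

/-- `{Ω_t}_{t ∈ U}` is a smooth family of smooth bounded domains. -/
def IsSmoothFamily (n : ℕ) (Ω : Set (Cn (n + 1))) (U : Set ℂ) : Prop :=
  ∃ ρ : Cn n × ℂ → ℝ, ContDiffOn ℝ (⊤ : ℕ∞) ρ ((Set.univ : Set (Cn n)) ×ˢ U) ∧
    ∀ t ∈ U, (sliceSet n Ω t).Nonempty ∧ IsBounded (sliceSet n Ω t) ∧
      sliceSet n Ω t = {z' | ρ (z', t) < 0} ∧
      ∀ z' ∈ frontier (sliceSet n Ω t), fderiv ℝ (fun w' => ρ (w', t)) z' ≠ 0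

/-- Laplacian with respect to the underlying real coordinates of `ℂⁿ ≅ ℝ^{2n}`. -/
def laplacian (n : ℕ) (f : Cn n → ℂ) (z : Cn n) : ℂ :=
  ∑ j : Fin n,
    (fderiv ℝ (fun x => fderiv ℝ f x (EuclideanSpace.single j (1 : ℂ))) z
        (EuclideanSpace.single j (1 : ℂ))
      + fderiv ℝ (fun x => fderiv ℝ f x (EuclideanSpace.single j Complex.I)) z
        (EuclideanSpace.single j Complex.I))

/-- `f` is harmonic on `Ω`. -/
def HarmonicOnD (n : ℕ) (f : Cn n → ℂ) (Ω : Set (Cn n)) : Prop :=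
  ContDiffOn ℝ 2 f Ω ∧ ∀ z ∈ Ω, laplacian n f z = 0

/-- Determinant of the complex Jacobian matrix of `w`, with derivatives taken within `s`. -/
def complexJacDet (n : ℕ) (w : Cn n → Cn n) (s : Set (Cn n)) (z : Cn n) : ℂ :=
  Matrix.det (Matrix.of fun j k : Fin n =>
    (1 / 2 : ℂ) * ((fderivWithin ℝ w s z (EuclideanSpace.single k (1 : ℂ))) j
      - Complex.I * (fderivWithin ℝ w s z (EuclideanSpace.single k Complex.I)) j))

/-- The boundary density `λ(z) = (|∇ρ₁(z)|/|∇ρ₂(w(z))|) |J_w(z)|²` with `ρ₁ = ρ₂ ∘ w`. -/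
def lambdaFun (n : ℕ) (w : Cn n → Cn n) (ρ₂ : Cn n → ℝ) (Ω₁ : Set (Cn n)) (z : Cn n) : ℝ :=
  (‖fderivWithin ℝ (fun q => ρ₂ (w q)) (closure Ω₁) z‖ / ‖fderiv ℝ ρ₂ (w z)‖)
    * ‖complexJacDet n w (closure Ω₁) z‖ ^ 2

end

set_option maxHeartbeats 1000000 in
theorem stmt12 (a C r : ℝ) (ha : 0 ≤ a) (hC : 0 < C) (hr : 0 < r)
    (ρ : ℂ × ℂ → ℝ)
    (hρ : ∀ z : ℂ × ℂ, Real.sqrt (‖z.1‖ ^ 2 + ‖z.2‖ ^ 2) < r →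
      2 * z.1.re + a * ‖z.2‖ ^ 2
          - C * (‖z.1‖ * ‖z.2‖ + ‖z.1‖ ^ 2
            + ‖z.2‖ ^ 3)
        ≤ ρ z) :
    ∃ c : ℝ, 0 < c ∧ ∃ ε₀ : ℝ, 0 < ε₀ ∧ ∀ ε : ℝ, ε ∈ Set.Ioo 0 ε₀ →
      (∀ z : ℂ × ℂ, ‖z.1 - ε‖ < ε / 2 →
        ‖z.2‖ < c * ε ^ ((1 : ℝ) / 3) → 0 < ρ z) ∧
      {z : ℂ × ℂ | ‖z.1 - ε‖ < ε / 2 ∧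
          ‖z.2‖ < c * ε ^ ((1 : ℝ) / 3)} ∩ {z | ρ z < 0} = ∅ := by

  refine ⟨min 1 ((1/(4*C)) ^ ((1:ℝ)/3)), lt_min one_pos (Real.rpow_pos_of_pos (by positivity) _),
    min 1 (min ((2/(15*C))^3) ((r/2)^3)), lt_min one_pos (lt_min (by positivity) (by positivity)),
    fun ε hε => ?_⟩
  set c : ℝ := min 1 ((1/(4*C)) ^ ((1:ℝ)/3)) with hcdef
  obtain ⟨hε0, hεlt⟩ := hε
  have hε1 : ε ≤ 1 := le_of_lt (lt_of_lt_of_le hεlt (min_le_left _ _))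
  have hεA : ε < (2/(15*C))^3 := lt_of_lt_of_le hεlt (le_trans (min_le_right _ _) (min_le_left _ _))
  have hεB : ε < (r/2)^3 := lt_of_lt_of_le hεlt (le_trans (min_le_right _ _) (min_le_right _ _))
  set u : ℝ := ε ^ ((1:ℝ)/3) with hudef
  have hu0 : 0 < u := Real.rpow_pos_of_pos hε0 _
  have hu3 : u ^ 3 = ε := by
    rw [hudef, ← Real.rpow_natCast (ε ^ ((1:ℝ)/3)) 3, ← Real.rpow_mul hε0.le]
    norm_num
  have hu1 : u ≤ 1 := Real.rpow_le_one hε0.le hε1 (by norm_num)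
  -- c bounds
  have hc0 : (0:ℝ) < c := lt_min one_pos (Real.rpow_pos_of_pos (by positivity) _)
  have hc1 : c ≤ 1 := min_le_left _ _
  have hc3 : C * c ^ 3 ≤ 1/4 := by
    have hd3 : ((1/(4*C)) ^ ((1:ℝ)/3)) ^ 3 = 1/(4*C) := by
      rw [← Real.rpow_natCast ((1/(4*C)) ^ ((1:ℝ)/3)) 3, ← Real.rpow_mul (by positivity)]
      norm_num
    have : c ^ 3 ≤ 1/(4*C) := by
      rw [← hd3]
      exact pow_le_pow_left₀ hc0.le (min_le_right _ _) 3
    calc C * c ^ 3 ≤ C * (1/(4*C)) := by nlinarith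
      _ = 1/4 := by field_simp
  have huC : C * u ≤ 2/15 := by
    have hu' : u < 2/(15*C) := by
      refine lt_of_pow_lt_pow_left₀ 3 (by positivity) ?_
      rw [hu3]; exact hεA
    have h2 : C * u < C * (2/(15*C)) := mul_lt_mul_of_pos_left hu' hC
    have h3 : C * (2/(15*C)) = 2/15 := by field_simp
    linarith
  have hur : u < r/2 := by
    refine lt_of_pow_lt_pow_left₀ 3 (by positivity) ?_
    rw [hu3]; exact hεB
  have hu3u : u ^ 3 ≤ u := pow_le_of_le_one hu0.le hu1 (by norm_num)
  have key : ∀ z : ℂ × ℂ, ‖z.1 - ε‖ < ε / 2 →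
      ‖z.2‖ < c * ε ^ ((1 : ℝ) / 3) → 0 < ρ z := by
    intro z h1 h2
    set A := ‖z.1‖ with hAdef
    set B := ‖z.2‖ with hBdef
    have hA0 : 0 ≤ A := norm_nonneg _
    have hB0 : 0 ≤ B := norm_nonneg _
    have hA : A < 3/2 * u ^ 3 := by
      have : A ≤ ‖z.1 - ε‖ + ‖(ε:ℂ)‖ := by
        calc A = ‖(z.1 - ε) + ε‖ := by rw [sub_add_cancel]
          _ ≤ _ := norm_add_le _ _
      have hεabs : ‖(ε:ℂ)‖ = ε := by
        rw [Complex.norm_real, Real.norm_eq_abs, abs_of_pos hε0]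
      rw [hu3]; rw [hεabs] at this; linarith
    have hBcu : B < c * u := h2
    have hBu : B ≤ u := le_of_lt (lt_of_lt_of_le hBcu (by nlinarith))
    have hR : ε / 2 < z.1.re := by
      have h := Complex.abs_re_le_norm (z.1 - (ε:ℂ))
      have hre : (z.1 - (ε:ℂ)).re = z.1.re - ε := by simp
      rw [hre] at h
      have := abs_lt.mp (lt_of_le_of_lt h h1)
      linarith [this.1]
    -- apply hρ
    have hnorm : Real.sqrt (A ^ 2 + B ^ 2) < r := by
      rw [Real.sqrt_lt' hr]
      have hA' : A < 3/4 * r := by nlinarith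
      have hB' : B < r/2 := lt_of_le_of_lt hBu hur
      nlinarith
    have hlow := hρ z hnorm
    have hAB : C * (A * B) ≤ 1/5 * u ^ 3 := by
      have h1' : A * B ≤ (3/2 * u ^ 3) * u := by nlinarith
      nlinarith [pow_nonneg hu0.le 3, pow_nonneg hu0.le 4]
    have hA2 : C * A ^ 2 ≤ 3/10 * u ^ 3 := by
      have h1' : A ^ 2 ≤ (3/2 * u ^ 3) ^ 2 := by nlinarith
      have h2' : u ^ 6 ≤ u ^ 4 := pow_le_pow_of_le_one hu0.le hu1 (by norm_num)
      nlinarith [pow_nonneg hu0.le 3, pow_nonneg hu0.le 4, pow_nonneg hu0.le 6]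
    have hB3 : C * B ^ 3 ≤ 1/4 * u ^ 3 := by
      have h1' : B ^ 3 ≤ (c * u) ^ 3 := pow_le_pow_left₀ hB0 hBcu.le 3
      have h2' : (c * u) ^ 3 = c ^ 3 * u ^ 3 := by ring
      nlinarith [pow_nonneg hu0.le 3, pow_nonneg hc0.le 3]
    have haB : 0 ≤ a * B ^ 2 := mul_nonneg ha (sq_nonneg B)
    have : 0 < 2 * z.1.re + a * B ^ 2 - C * (A * B + A ^ 2 + B ^ 3) := by
      have hdist : C * (A * B + A ^ 2 + B ^ 3) = C * (A * B) + C * A ^ 2 + C * B ^ 3 := by ring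
      have hε3 : ε = u ^ 3 := hu3.symm
      linarith
    linarith [hlow]
  refine ⟨key, ?_⟩
  ext z
  simp only [Set.mem_inter_iff, Set.mem_setOf_eq, Set.mem_empty_iff_false, iff_false, not_and]
  intro ⟨hz1, hz2⟩
  exact not_lt.mpr (key z hz1 hz2).le
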